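/- Let f : ℝⁿ → ℝ be three times continuously differentiable, μ-strongly convex and M-self-concordant, with unique minimizer x*, and let (x_k, B_k) be the iterates of adaptive BFGS (Algorithm 1). Write Δ := f(x₀) − f(x*), I_∞ := {k ∈ ℕ : Mη_k < 1}, I_k := {i ∈ I_∞ : i < k}, and Ī_k := {0,1,…,k−1} \ I_k. Then for every k ≥ 1, the cardinality satisfies |Ī_k| ≤ 4M²Δ. -/

import Mathlib

noncomputable section

open scoped BigOperators Classical

/-- Vectors in `ℝⁿ` with the Euclidean norm. -/
abbrev V (n : ℕ) := EuclideanSpace ℝ (Fin n)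

/-- The Euclidean dot product `uᵀv`. -/
def dot {n : ℕ} (u v : V n) : ℝ := ∑ i, u i * v i

/-- The Hessian quadratic form `dᵀ∇²f(x)d`. -/
def hessQ {n : ℕ} (f : V n → ℝ) (x d : V n) : ℝ := iteratedFDeriv ℝ 2 f x ![d, d]

/-- The weighted norm `‖d‖ₓ = (dᵀ∇²f(x)d)^{1/2}`. -/
def wnorm {n : ℕ} (f : V n → ℝ) (x d : V n) : ℝ := Real.sqrt (hessQ f x d)

/-- `f` is `μ`-strongly convex. -/
def StrongConvex {n : ℕ} (μ : ℝ) (f : V n → ℝ) : Prop :=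
  ∀ x y : V n, ∀ l : ℝ, 0 ≤ l → l ≤ 1 →
    f (l • x + (1 - l) • y) ≤ l * f x + (1 - l) * f y - l * (1 - l) * μ / 2 * ‖x - y‖ ^ 2

/-- `f` has `L`-Lipschitz continuous gradient. -/
def LipschitzGrad {n : ℕ} (L : ℝ) (f : V n → ℝ) : Prop :=
  ∀ x y : V n, ‖gradient f x - gradient f y‖ ≤ L * ‖x - y‖

/-- `f` is `M`-self-concordant: `|D³f(x)[d,d,d]| ≤ 2M (dᵀ∇²f(x)d)^{3/2}`. -/
def SelfConcordant {n : ℕ} (M : ℝ) (f : V n → ℝ) : Prop :=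
  ∀ x d : V n, |iteratedFDeriv ℝ 3 f x ![d, d, d]| ≤ 2 * M * hessQ f x d ^ ((3 : ℝ) / 2)

/-- `f` has `L₂`-Lipschitz continuous Hessian. -/
def LipschitzHessian {n : ℕ} (L₂ : ℝ) (f : V n → ℝ) : Prop :=
  ∀ x y : V n, ‖iteratedFDeriv ℝ 2 f x - iteratedFDeriv ℝ 2 f y‖ ≤ L₂ * ‖x - y‖

/-- `ω(z) = z - ln(1+z)`. -/
def omegaFn (z : ℝ) : ℝ := z - Real.log (1 + z)

/-- `ω⋆(z) = -z - ln(1-z)`. -/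
def omegaStar (z : ℝ) : ℝ := -z - Real.log (1 - z)

/-- Matrix–vector multiplication acting on Euclidean space. -/
def mulv {n : ℕ} (A : Matrix (Fin n) (Fin n) ℝ) (v : V n) : V n :=
  (EuclideanSpace.equiv (Fin n) ℝ).symm (A.mulVec (EuclideanSpace.equiv (Fin n) ℝ v))

/-- `g_k = ∇f(x_k)`. -/
def gvec {n : ℕ} (f : V n → ℝ) (x : ℕ → V n) (k : ℕ) : V n := gradient f (x k)

/-- `d_k = -B_k⁻¹ g_k`. -/
def dvec {n : ℕ} (f : V n → ℝ) (x : ℕ → V n) (B : ℕ → Matrix (Fin n) (Fin n) ℝ) (k : ℕ) : V n :=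
  -(mulv (B k)⁻¹ (gvec f x k))

/-- `η_k = -g_kᵀd_k / ‖d_k‖_{x_k}`. -/
def etaSeq {n : ℕ} (f : V n → ℝ) (x : ℕ → V n) (B : ℕ → Matrix (Fin n) (Fin n) ℝ) (k : ℕ) : ℝ :=
  -(dot (gvec f x k) (dvec f x B k)) / wnorm f (x k) (dvec f x B k)

/-- The adaptive step size `t_k = η_k / ((1 + M η_k) ‖d_k‖_{x_k})`. -/
def tSeq {n : ℕ} (f : V n → ℝ) (M : ℝ) (x : ℕ → V n) (B : ℕ → Matrix (Fin n) (Fin n) ℝ)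
    (k : ℕ) : ℝ :=
  etaSeq f x B k / ((1 + M * etaSeq f x B k) * wnorm f (x k) (dvec f x B k))

/-- `s_k = x_{k+1} - x_k`. -/
def svec {n : ℕ} (x : ℕ → V n) (k : ℕ) : V n := x (k + 1) - x k

/-- `y_k = g_{k+1} - g_k`. -/
def yvec {n : ℕ} (f : V n → ℝ) (x : ℕ → V n) (k : ℕ) : V n := gvec f x (k + 1) - gvec f x k

/-- The outer product `u vᵀ`. -/
def outer {n : ℕ} (u v : V n) : Matrix (Fin n) (Fin n) ℝ := Matrix.of fun i j => u i * v j

/-- The adaptive BFGS method (Algorithm 1). -/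
structure AdaptiveBFGS {n : ℕ} (f : V n → ℝ) (M : ℝ) (x : ℕ → V n)
    (B : ℕ → Matrix (Fin n) (Fin n) ℝ) : Prop where
  posdef : (B 0).PosDef
  step : ∀ k, x (k + 1) = x k + tSeq f M x B k • dvec f x B k
  update : ∀ k, B (k + 1) =
    B k - (dot (svec x k) (mulv (B k) (svec x k)))⁻¹ • (B k * outer (svec x k) (svec x k) * B k)
      + (dot (yvec f x k) (svec x k))⁻¹ • outer (yvec f x k) (yvec f x k)

/-- `α_k = ‖d_k‖_{x_k} / (√L ‖d_k‖)`. -/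
def alphaSeq {n : ℕ} (f : V n → ℝ) (L : ℝ) (x : ℕ → V n) (B : ℕ → Matrix (Fin n) (Fin n) ℝ)
    (k : ℕ) : ℝ :=
  wnorm f (x k) (dvec f x B k) / (Real.sqrt L * ‖dvec f x B k‖)

/-- The smoothness aided adaptive step size `t̃_k`. -/
def ttSeq {n : ℕ} (f : V n → ℝ) (M L : ℝ) (x : ℕ → V n) (B : ℕ → Matrix (Fin n) (Fin n) ℝ)
    (k : ℕ) : ℝ :=
  if (1 + M * etaSeq f x B k) * alphaSeq f L x B k ≤ 1 then
    etaSeq f x B k / ((1 + M * etaSeq f x B k) * wnorm f (x k) (dvec f x B k))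
  else
    (M * etaSeq f x B k * alphaSeq f L x B k ^ 2 + (1 - alphaSeq f L x B k) ^ 2)
      / (M * wnorm f (x k) (dvec f x B k))

/-- The smoothness aided adaptive BFGS method SA²-BFGS (Algorithm 3). -/
structure SA2BFGS {n : ℕ} (f : V n → ℝ) (M L : ℝ) (x : ℕ → V n)
    (B : ℕ → Matrix (Fin n) (Fin n) ℝ) : Prop where
  posdef : (B 0).PosDef
  step : ∀ k, x (k + 1) = x k + ttSeq f M L x B k • dvec f x B k
  update : ∀ k, B (k + 1) =
    B k - (dot (svec x k) (mulv (B k) (svec x k)))⁻¹ • (B k * outer (svec x k) (svec x k) * B k)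
      + (dot (yvec f x k) (svec x k))⁻¹ • outer (yvec f x k) (yvec f x k)

/-- The square root of a positive semidefinite matrix, as `Matrix.PosSemidef.sqrt` was defined
in the older Mathlib. -/
def psdSqrt {n : ℕ} {A : Matrix (Fin n) (Fin n) ℝ} (hA : A.PosSemidef) : Matrix (Fin n) (Fin n) ℝ :=
  hA.1.eigenvectorUnitary.1 * Matrix.diagonal ((↑) ∘ (Real.sqrt ·) ∘ hA.1.eigenvalues) *
    (star hA.1.eigenvectorUnitary : Matrix (Fin n) (Fin n) ℝ)

/-- `ĝ_k = P^{-1/2} g_k`. -/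
def hatg {n : ℕ} (f : V n → ℝ) (x : ℕ → V n) (P : Matrix (Fin n) (Fin n) ℝ) (hP : P.PosDef)
    (k : ℕ) : V n :=
  mulv (psdSqrt hP.posSemidef)⁻¹ (gvec f x k)

/-- `ŝ_k = P^{1/2} s_k`. -/
def hats {n : ℕ} (x : ℕ → V n) (P : Matrix (Fin n) (Fin n) ℝ) (hP : P.PosDef) (k : ℕ) : V n :=
  mulv (psdSqrt hP.posSemidef) (svec x k)

/-- `ŷ_k = P^{-1/2} y_k`. -/
def haty {n : ℕ} (f : V n → ℝ) (x : ℕ → V n) (P : Matrix (Fin n) (Fin n) ℝ) (hP : P.PosDef)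
    (k : ℕ) : V n :=
  mulv (psdSqrt hP.posSemidef)⁻¹ (yvec f x k)

/-- `cos θ̂_k = -ĝ_kᵀŝ_k / (‖ĝ_k‖ ‖ŝ_k‖)`. -/
def cosθ {n : ℕ} (f : V n → ℝ) (x : ℕ → V n) (P : Matrix (Fin n) (Fin n) ℝ) (hP : P.PosDef)
    (k : ℕ) : ℝ :=
  -(dot (hatg f x P hP k) (hats x P hP k)) / (‖hatg f x P hP k‖ * ‖hats x P hP k‖)

/-- `m̂_k = ŷ_kᵀŝ_k / ‖ŝ_k‖²`. -/
def mhat {n : ℕ} (f : V n → ℝ) (x : ℕ → V n) (P : Matrix (Fin n) (Fin n) ℝ) (hP : P.PosDef)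
    (k : ℕ) : ℝ :=
  dot (haty f x P hP k) (hats x P hP k) / ‖hats x P hP k‖ ^ 2

/-- `q̂_k = ‖ĝ_k‖² / (f(x_k) - f(x*))`. -/
def qhat {n : ℕ} (f : V n → ℝ) (x : ℕ → V n) (xstar : V n) (P : Matrix (Fin n) (Fin n) ℝ)
    (hP : P.PosDef) (k : ℕ) : ℝ :=
  ‖hatg f x P hP k‖ ^ 2 / (f (x k) - f xstar)

/-- The potential function `Ψ(A) = tr(A) - ln det(A) - n`. -/
def Psi {n : ℕ} (A : Matrix (Fin n) (Fin n) ℝ) : ℝ := A.trace - Real.log A.det - n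

/-- The Hessian matrix `∇²f(x)` in the standard basis. -/
def hessMatrix {n : ℕ} (f : V n → ℝ) (x : V n) : Matrix (Fin n) (Fin n) ℝ :=
  Matrix.of fun i j =>
    iteratedFDeriv ℝ 2 f x ![EuclideanSpace.single i (1 : ℝ), EuclideanSpace.single j (1 : ℝ)]

section AuxLemmas

variable {n : ℕ} {f : V n → ℝ}

lemma hasDerivAt_gamma (x d : V n) (t : ℝ) :
    HasDerivAt (fun s : ℝ => x + s • d) d t := by
  simpa using ((hasDerivAt_id t).smul_const d).const_add x

lemma hasDerivAt_line0 (hf : ContDiff ℝ 3 f) (x d : V n) (t : ℝ) :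
    HasDerivAt (fun s : ℝ => f (x + s • d)) (fderiv ℝ f (x + t • d) d) t := by
  have hfd : HasFDerivAt f (fderiv ℝ f (x + t • d)) (x + t • d) :=
    (hf.differentiable (by norm_num) (x + t • d)).hasFDerivAt
  exact hfd.comp_hasDerivAt t (hasDerivAt_gamma x d t)

lemma hasDerivAt_line1 (hf : ContDiff ℝ 3 f) (x d : V n) (t : ℝ) :
    HasDerivAt (fun s : ℝ => fderiv ℝ f (x + s • d) d) (hessQ f (x + t • d) d) t := by
  have h1 : HasFDerivAt (fderiv ℝ f) (fderiv ℝ (fderiv ℝ f) (x + t • d)) (x + t • d) :=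
    ((hf.fderiv_right (m := 2) (by norm_num)).differentiable (by norm_num) _).hasFDerivAt
  have h2 : HasFDerivAt (fun z => fderiv ℝ f z d)
      ((ContinuousLinearMap.apply ℝ ℝ d).comp (fderiv ℝ (fderiv ℝ f) (x + t • d)))
      (x + t • d) :=
    (ContinuousLinearMap.apply ℝ ℝ d).hasFDerivAt.comp _ h1
  have h3 := h2.comp_hasDerivAt t (hasDerivAt_gamma x d t)
  have : hessQ f (x + t • d) d = fderiv ℝ (fderiv ℝ f) (x + t • d) d d := by
    rw [hessQ, iteratedFDeriv_two_apply]; simp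
  rw [this]
  exact h3

lemma hasDerivAt_line2 (hf : ContDiff ℝ 3 f) (x d : V n) (t : ℝ) :
    HasDerivAt (fun s : ℝ => hessQ f (x + s • d) d)
      (iteratedFDeriv ℝ 3 f (x + t • d) ![d, d, d]) t := by
  have h1 : HasFDerivAt (iteratedFDeriv ℝ 2 f) (fderiv ℝ (iteratedFDeriv ℝ 2 f) (x + t • d))
      (x + t • d) :=
    ((hf.iteratedFDeriv_right (m := 1) (i := 2) (by norm_num)).differentiable (by norm_num) _).hasFDerivAt
  have h2 : HasFDerivAt (fun z => hessQ f z d)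
      ((ContinuousMultilinearMap.apply ℝ (fun _ : Fin 2 => V n) ℝ ![d, d]).comp
        (fderiv ℝ (iteratedFDeriv ℝ 2 f) (x + t • d))) (x + t • d) :=
    (ContinuousMultilinearMap.apply ℝ (fun _ : Fin 2 => V n) ℝ ![d, d]).hasFDerivAt.comp _ h1
  have h3 := h2.comp_hasDerivAt t (hasDerivAt_gamma x d t)
  have : iteratedFDeriv ℝ 3 f (x + t • d) ![d, d, d]
      = fderiv ℝ (iteratedFDeriv ℝ 2 f) (x + t • d) d ![d, d] := by
    exact iteratedFDeriv_succ_apply_left ![d, d, d]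
  rw [this]
  exact h3

lemma dot_eq_inner (u v : V n) : dot u v = (inner ℝ u v : ℝ) := by
  simp [dot, PiLp.inner_apply, RCLike.inner_apply, mul_comm]

lemma inner_gradient_eq (f : V n → ℝ) (x v : V n) :
    (inner ℝ (gradient f x) v : ℝ) = fderiv ℝ f x v :=
  InnerProductSpace.toDual_symm_apply

open Filter Topology in
lemma first_order (hf : ContDiff ℝ 3 f) {μ : ℝ} (hsc : StrongConvex μ f) (x y : V n) :
    (inner ℝ (gradient f x) (y - x) : ℝ) ≤ f y - f x - μ / 2 * ‖y - x‖ ^ 2 := by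
  set d := y - x with hd
  have hder := hasDerivAt_line0 hf x d 0
  rw [show x + (0:ℝ) • d = x by simp] at hder
  have hslope : Tendsto (fun l : ℝ => (f (x + l • d) - f x) / l) (𝓝[>] 0)
      (𝓝 (fderiv ℝ f x d)) := by
    have := (hasDerivAt_iff_tendsto_slope.mp hder).mono_left
      (nhdsWithin_mono 0 (by intro z hz; exact ne_of_gt hz : Set.Ioi (0:ℝ) ⊆ {0}ᶜ))
    refine this.congr (fun l => ?_)
    simp [slope, vsub_eq_sub, div_eq_inv_mul]
  have hineq : ∀ᶠ l in 𝓝[>] (0:ℝ), (f (x + l • d) - f x) / l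
      ≤ f y - f x - (1 - l) * μ / 2 * ‖d‖ ^ 2 := by
    filter_upwards [Ioo_mem_nhdsGT_of_mem (Set.left_mem_Ico.mpr one_pos)] with l hl
    have h := hsc y x l hl.1.le hl.2.le
    have hxy : l • y + (1 - l) • x = x + l • d := by
      rw [hd]; module
    rw [hxy] at h
    rw [div_le_iff₀ hl.1]
    have : ‖y - x‖ = ‖d‖ := rfl
    nlinarith [hl.1]
  have hrhs : Tendsto (fun l : ℝ => f y - f x - (1 - l) * μ / 2 * ‖d‖ ^ 2) (𝓝[>] (0:ℝ))
      (𝓝 (f y - f x - μ / 2 * ‖d‖ ^ 2)) := by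
    have : ContinuousAt (fun l : ℝ => f y - f x - (1 - l) * μ / 2 * ‖d‖ ^ 2) 0 := by
      fun_prop
    have h2 : Tendsto (fun l : ℝ => f y - f x - (1 - l) * μ / 2 * ‖d‖ ^ 2) (𝓝[>] (0:ℝ))
        (𝓝 (f y - f x - (1 - 0) * μ / 2 * ‖d‖ ^ 2)) :=
      this.tendsto.mono_left nhdsWithin_le_nhds
    simpa using h2
  have := le_of_tendsto_of_tendsto hslope hrhs hineq
  rwa [inner_gradient_eq]

lemma strong_mono (hf : ContDiff ℝ 3 f) {μ : ℝ} (hsc : StrongConvex μ f) (x y : V n) :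
    μ * ‖x - y‖ ^ 2 ≤ (inner ℝ (gradient f x - gradient f y) (x - y) : ℝ) := by
  have h1 := first_order hf hsc x y
  have h2 := first_order hf hsc y x
  have e1 : (inner ℝ (gradient f x - gradient f y) (x - y) : ℝ)
      = -(inner ℝ (gradient f x) (y - x) : ℝ) - (inner ℝ (gradient f y) (x - y) : ℝ) := by
    rw [inner_sub_left]
    have : (inner ℝ (gradient f x) (x - y) : ℝ) = -(inner ℝ (gradient f x) (y - x) : ℝ) := by
      rw [← inner_neg_right]; congr 1; abel
    rw [this]; try ring
  have e2 : ‖y - x‖ = ‖x - y‖ := norm_sub_rev _ _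
  rw [e1]
  rw [e2] at h1
  nlinarith [h1, h2]

open Filter Topology in
lemma hessQ_lower (hf : ContDiff ℝ 3 f) {μ : ℝ} (hsc : StrongConvex μ f) (x d : V n) :
    μ * ‖d‖ ^ 2 ≤ hessQ f x d := by
  have hder := hasDerivAt_line1 hf x d 0
  rw [show x + (0:ℝ) • d = x by simp] at hder
  have hslope : Tendsto (fun t : ℝ => (fderiv ℝ f (x + t • d) d - fderiv ℝ f x d) / t)
      (𝓝[>] 0) (𝓝 (hessQ f x d)) := by
    have := (hasDerivAt_iff_tendsto_slope.mp hder).mono_left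
      (nhdsWithin_mono 0 (by intro z hz; exact ne_of_gt hz : Set.Ioi (0:ℝ) ⊆ {0}ᶜ))
    refine this.congr (fun l => ?_)
    simp [slope, vsub_eq_sub, div_eq_inv_mul]
  refine ge_of_tendsto hslope ?_
  filter_upwards [self_mem_nhdsWithin] with t (ht : 0 < t)
  have hm := strong_mono hf hsc (x + t • d) x
  have e0 : x + t • d - x = t • d := by abel
  rw [e0] at hm
  have e1 : (inner ℝ (gradient f (x + t • d) - gradient f x) (t • d) : ℝ)
      = t * (fderiv ℝ f (x + t • d) d - fderiv ℝ f x d) := by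
    rw [inner_smul_right, inner_sub_left, inner_gradient_eq, inner_gradient_eq]
  have e2 : ‖t • d‖ ^ 2 = t ^ 2 * ‖d‖ ^ 2 := by
    rw [norm_smul]; rw [Real.norm_eq_abs]; rw [mul_pow, sq_abs]
  rw [e1, e2] at hm
  rw [le_div_iff₀ ht]
  nlinarith [hm]

lemma mono_aux {F F' : ℝ → ℝ} {T : ℝ}
    (hF : ∀ t ∈ Set.Icc 0 T, HasDerivAt F (F' t) t)
    (h0 : ∀ t ∈ Set.Icc 0 T, 0 ≤ F' t) : MonotoneOn F (Set.Icc 0 T) := by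
  refine monotoneOn_of_deriv_nonneg (convex_Icc 0 T)
    (fun t ht => (hF t ht).continuousAt.continuousWithinAt) ?_ ?_
  · intro t ht
    rw [interior_Icc] at ht
    exact (hF t (Set.Ioo_subset_Icc_self ht)).differentiableAt.differentiableWithinAt
  · intro t ht
    rw [interior_Icc] at ht
    rw [(hF t (Set.Ioo_subset_Icc_self ht)).deriv]
    exact h0 t (Set.Ioo_subset_Icc_self ht)

lemma descent {μ M : ℝ} (hμ : 0 < μ) (hM : 0 < M) (hf : ContDiff ℝ 3 f)
    (hsc : StrongConvex μ f) (hself : SelfConcordant M f)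
    (x d : V n) (hd : d ≠ 0) (T : ℝ) (hT : 0 ≤ T)
    (hTb : M * wnorm f x d * T < 1) :
    f (x + T • d) ≤ f x + fderiv ℝ f x d * T
      + 1 / M ^ 2 * omegaStar (M * wnorm f x d * T) := by
  set b := wnorm f x d with hbdef
  set u : ℝ → ℝ := fun t => hessQ f (x + t • d) d with hu
  set u' : ℝ → ℝ := fun t => iteratedFDeriv ℝ 3 f (x + t • d) ![d, d, d] with hu'
  have hm : 0 < μ * ‖d‖ ^ 2 := mul_pos hμ (pow_pos (norm_pos_iff.mpr hd) 2)
  have hupos : ∀ t, 0 < u t := fun t => lt_of_lt_of_le hm (hessQ_lower hf hsc _ d)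
  have hu0 : u 0 = hessQ f x d := by simp [hu]
  have hb : 0 < b := by
    rw [hbdef, wnorm]
    exact Real.sqrt_pos.mpr (by rw [← hu0]; exact hupos 0)
  have hbsq : b ^ 2 = u 0 := by
    rw [hbdef, wnorm, hu0]
    exact Real.sq_sqrt (le_of_lt (by rw [← hu0]; exact hupos 0))
  -- positivity of 1 - M*b*t on the interval
  have hpos : ∀ t ∈ Set.Icc (0:ℝ) T, 0 < 1 - M * b * t := by
    intro t ht
    have h1 : M * b * t ≤ M * b * T := by
      have : (0:ℝ) ≤ M * b := by positivity
      nlinarith [ht.2]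
    linarith
  -- the function w = (sqrt u)⁻¹ and its derivative bound
  set w : ℝ → ℝ := fun t => (Real.sqrt (u t))⁻¹ with hw
  have hsqrtpos : ∀ t, 0 < Real.sqrt (u t) := fun t => Real.sqrt_pos.mpr (hupos t)
  have hwderiv : ∀ t : ℝ, HasDerivAt w (-(u' t / (2 * Real.sqrt (u t))) / Real.sqrt (u t) ^ 2) t := by
    intro t
    have h1 : HasDerivAt (fun s => Real.sqrt (u s)) (u' t / (2 * Real.sqrt (u t))) t :=
      (hasDerivAt_line2 hf x d t).sqrt (ne_of_gt (hupos t))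
    exact h1.inv (ne_of_gt (hsqrtpos t))
  have hrpow : ∀ t, u t ^ ((3:ℝ)/2) = u t * Real.sqrt (u t) := by
    intro t
    rw [show (3:ℝ)/2 = 1 + 1/2 by norm_num, Real.rpow_add (hupos t), Real.rpow_one,
      ← Real.sqrt_eq_rpow]
  have hwbound : ∀ t : ℝ, |(-(u' t / (2 * Real.sqrt (u t))) / Real.sqrt (u t) ^ 2)| ≤ M := by
    intro t
    have hub : |u' t| ≤ 2 * M * (u t * Real.sqrt (u t)) := by
      rw [← hrpow t]; exact hself (x + t • d) d
    rw [abs_div, abs_neg, abs_div]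
    have hs := hsqrtpos t
    rw [abs_of_pos (by positivity : (0:ℝ) < 2 * Real.sqrt (u t)),
        abs_of_pos (by positivity : (0:ℝ) < Real.sqrt (u t) ^ 2)]
    rw [div_div, div_le_iff₀ (by positivity)]
    calc |u' t| ≤ 2 * M * (u t * Real.sqrt (u t)) := hub
      _ = M * (2 * Real.sqrt (u t) * Real.sqrt (u t) ^ 2) := by
          rw [Real.sq_sqrt (le_of_lt (hupos t))]; ring
  -- |w t - w 0| ≤ M t on [0,T]
  have hwlip : ∀ t ∈ Set.Icc (0:ℝ) T, |w t - w 0| ≤ M * (t - 0) := by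
    intro t ht
    exact norm_image_sub_le_of_norm_deriv_le_segment'
      (f := w) (f' := fun t => -(u' t / (2 * Real.sqrt (u t))) / Real.sqrt (u t) ^ 2)
      (fun s _ => (hwderiv s).hasDerivWithinAt)
      (fun s _ => hwbound s) t ht
  have hw0 : w 0 = b⁻¹ := by simp [hw, hbdef, wnorm, hu]
  -- bound on u
  have hub : ∀ t ∈ Set.Icc (0:ℝ) T, u t ≤ (b / (1 - M * b * t)) ^ 2 := by
    intro t ht
    have h1 : (1 - M * b * t) / b ≤ w t := by
      have h2 := (abs_le.mp (hwlip t ht)).1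
      rw [hw0] at h2
      have : b⁻¹ - M * t ≤ w t := by linarith
      calc (1 - M * b * t) / b = b⁻¹ - M * t := by field_simp
        _ ≤ w t := this
    have hden : 0 < (1 - M * b * t) / b := div_pos (hpos t ht) hb
    have h3 : Real.sqrt (u t) ≤ b / (1 - M * b * t) := by
      calc Real.sqrt (u t) = 1 / w t := by rw [hw]; simp
        _ ≤ 1 / ((1 - M * b * t) / b) := one_div_le_one_div_of_le hden h1
        _ = b / (1 - M * b * t) := by rw [one_div, inv_div]
    calc u t = Real.sqrt (u t) ^ 2 := (Real.sq_sqrt (le_of_lt (hupos t))).symm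
      _ ≤ (b / (1 - M * b * t)) ^ 2 := by
          apply pow_le_pow_left₀ (Real.sqrt_nonneg _) h3
  -- first comparison: E t ≥ 0
  set E : ℝ → ℝ := fun t => b / M * ((1 - M * b * t)⁻¹ - 1)
    - (fderiv ℝ f (x + t • d) d - fderiv ℝ f x d) with hE
  have hEderiv : ∀ t ∈ Set.Icc (0:ℝ) T,
      HasDerivAt E (b ^ 2 / (1 - M * b * t) ^ 2 - u t) t := by
    intro t ht
    have h1 : HasDerivAt (fun s : ℝ => 1 - M * b * s) (-(M * b)) t := by
      simpa using ((hasDerivAt_id t).const_mul (M * b)).const_sub 1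
    have h2 : HasDerivAt (fun s : ℝ => (1 - M * b * s)⁻¹)
        (-(-(M * b)) / (1 - M * b * t) ^ 2) t := h1.inv (ne_of_gt (hpos t ht))
    have h3 := ((h2.sub_const 1).const_mul (b / M)).sub
      ((hasDerivAt_line1 hf x d t).sub_const (fderiv ℝ f x d))
    refine HasDerivAt.congr_deriv h3 ?_
    have hrw : u t = hessQ f (x + t • d) d := rfl
    have hM' : M ≠ 0 := ne_of_gt hM
    have hp' : 1 - M * b * t ≠ 0 := ne_of_gt (hpos t ht)
    rw [hrw]
    field_simp
  have hE0 : E 0 = 0 := by simp [hE]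
  have hEmono : MonotoneOn E (Set.Icc 0 T) := by
    refine mono_aux hEderiv ?_
    intro t ht
    have := hub t ht
    have h4 : (b / (1 - M * b * t)) ^ 2 = b ^ 2 / (1 - M * b * t) ^ 2 := by
      rw [div_pow]
    rw [h4] at this
    linarith
  have hEnonneg : ∀ t ∈ Set.Icc (0:ℝ) T, 0 ≤ E t := by
    intro t ht
    rw [← hE0]
    exact hEmono (Set.left_mem_Icc.mpr hT) ht ht.1
  -- second comparison
  set D : ℝ → ℝ := fun t => f x + fderiv ℝ f x d * t
    + 1 / M ^ 2 * (-(M * b * t) - Real.log (1 - M * b * t)) - f (x + t • d) with hD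
  have hDderiv : ∀ t ∈ Set.Icc (0:ℝ) T, HasDerivAt D (E t) t := by
    intro t ht
    have h1 : HasDerivAt (fun s : ℝ => 1 - M * b * s) (-(M * b)) t := by
      simpa using ((hasDerivAt_id t).const_mul (M * b)).const_sub 1
    have h2 : HasDerivAt (fun s : ℝ => Real.log (1 - M * b * s))
        ((-(M * b)) / (1 - M * b * t)) t := h1.log (ne_of_gt (hpos t ht))
    have h3 : HasDerivAt (fun s : ℝ => -(M * b * s)) (-(M * b)) t := by
      simpa using (hasDerivAt_id t).const_mul (-(M * b))
    have hA : HasDerivAt (fun s : ℝ => f x + fderiv ℝ f x d * s) (fderiv ℝ f x d) t := by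
      simpa using ((hasDerivAt_id t).const_mul (fderiv ℝ f x d)).const_add (f x)
    have h4 := (hA.add ((h3.sub h2).const_mul (1 / M ^ 2))).sub (hasDerivAt_line0 hf x d t)
    refine HasDerivAt.congr_deriv h4 ?_
    simp only [hE]
    have hM' : M ≠ 0 := ne_of_gt hM
    have hp' : 1 - M * b * t ≠ 0 := ne_of_gt (hpos t ht)
    field_simp
    ring
  have hDmono := mono_aux hDderiv hEnonneg
  have hDT := hDmono (Set.left_mem_Icc.mpr hT) (Set.right_mem_Icc.mpr hT) hT
  have hD0 : D 0 = 0 := by simp [hD]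
  rw [hD0] at hDT
  simp only [hD] at hDT
  rw [omegaStar]
  linarith

lemma dot_eq_dotProduct (u v : V n) : dot u v = dotProduct u.ofLp v.ofLp := rfl
lemma mulv_eq_mulVec (A : Matrix (Fin n) (Fin n) ℝ) (v : V n) :
    mulv A v = WithLp.toLp 2 (A.mulVec v.ofLp) := rfl
lemma outer_eq_vecMulVec (u v : Fin n → ℝ) :
    outer (WithLp.toLp 2 u) (WithLp.toLp 2 v) = Matrix.vecMulVec u v := rfl

lemma posdef_quad {Bm : Matrix (Fin n) (Fin n) ℝ} (hB : Bm.PosDef) (v : Fin n → ℝ)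
    (hv : v ≠ 0) : 0 < dotProduct v (Bm.mulVec v) := by
  have := hB.dotProduct_mulVec_pos hv
  simpa using this

open Matrix in
lemma dotProduct_mulVec_symm {Bm : Matrix (Fin n) (Fin n) ℝ} (hB : Bm.IsHermitian)
    (u w : Fin n → ℝ) :
    dotProduct u (Bm.mulVec w) = dotProduct w (Bm.mulVec u) := by
  rw [Matrix.dotProduct_mulVec, dotProduct_comm]
  congr 1
  have hBs : Bmᵀ = Bm := by
    have := hB; rwa [Matrix.IsHermitian, Matrix.conjTranspose_eq_transpose_of_trivial] at this
  rw [← Matrix.mulVec_transpose, hBs]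

lemma vecMulVec_mulVec_eq (s w : Fin n → ℝ) :
    (Matrix.vecMulVec s s).mulVec w = (dotProduct s w) • s := by
  funext i
  simp only [Matrix.mulVec, dotProduct, Matrix.vecMulVec_apply, Pi.smul_apply,
    smul_eq_mul]
  rw [Finset.sum_mul]
  exact Finset.sum_congr rfl fun j _ => by ring

open Matrix in
open Matrix in
lemma bfgs_update_posdef {Bm : Matrix (Fin n) (Fin n) ℝ} (hB : Bm.PosDef) (s y : Fin n → ℝ)
    (hs : s ≠ (0 : Fin n → ℝ)) (hys : 0 < dot (WithLp.toLp 2 y) (WithLp.toLp 2 s)) :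
    (Bm - (dot (WithLp.toLp 2 s) (mulv Bm (WithLp.toLp 2 s)))⁻¹ •
        (Bm * outer (WithLp.toLp 2 s) (WithLp.toLp 2 s) * Bm)
      + (dot (WithLp.toLp 2 y) (WithLp.toLp 2 s))⁻¹ •
        outer (WithLp.toLp 2 y) (WithLp.toLp 2 y)).PosDef := by
  have hsymm : Bmᴴ = Bm := hB.1
  have hq : 0 < dotProduct s (Bm.mulVec s) := posdef_quad hB s hs
  have hys' : 0 < dotProduct y s := hys
  set q := dotProduct s (Bm.mulVec s) with hqdef
  refine Matrix.PosDef.of_dotProduct_mulVec_pos ?_ ?_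
  · -- Hermitian
    show _ = _
    rw [Matrix.conjTranspose_add, Matrix.conjTranspose_sub, Matrix.conjTranspose_smul,
      Matrix.conjTranspose_smul, Matrix.conjTranspose_mul, Matrix.conjTranspose_mul]
    have houter : ∀ u w : V n, (outer u w)ᴴ = outer w u := by
      intro u w; ext i j; simp [outer, Matrix.conjTranspose_apply, mul_comm]
    rw [houter, houter, hB.1]
    have hdot : dot (WithLp.toLp 2 s) (mulv Bm (WithLp.toLp 2 s)) = q := rfl
    rw [Matrix.mul_assoc]
    simp [star_trivial]
  · intro v hv
    -- quadratic form computation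
    have hquad : dotProduct (star v)
        ((Bm - (dot (WithLp.toLp 2 s) (mulv Bm (WithLp.toLp 2 s)))⁻¹ •
            (Bm * outer (WithLp.toLp 2 s) (WithLp.toLp 2 s) * Bm)
          + (dot (WithLp.toLp 2 y) (WithLp.toLp 2 s))⁻¹ •
            outer (WithLp.toLp 2 y) (WithLp.toLp 2 y)).mulVec v)
        = dotProduct v (Bm.mulVec v) - q⁻¹ * (dotProduct v (Bm.mulVec s)) ^ 2
          + (dotProduct y s)⁻¹ * (dotProduct y v) ^ 2 := by
      have e0 : star v = v := by simp
      rw [e0]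
      have hdot : dot (WithLp.toLp 2 s) (mulv Bm (WithLp.toLp 2 s)) = q := rfl
      have hdot2 : dot (WithLp.toLp 2 y) (WithLp.toLp 2 s) = dotProduct y s := rfl
      rw [hdot, hdot2, Matrix.add_mulVec, Matrix.sub_mulVec, Matrix.smul_mulVec,
        Matrix.smul_mulVec, outer_eq_vecMulVec, outer_eq_vecMulVec]
      have e1 : (Bm * Matrix.vecMulVec s s * Bm).mulVec v
          = (dotProduct s (Bm.mulVec v)) • Bm.mulVec s := by
        rw [← Matrix.mulVec_mulVec, ← Matrix.mulVec_mulVec, vecMulVec_mulVec_eq,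
          Matrix.mulVec_smul]
      have e2 : (Matrix.vecMulVec y y).mulVec v = (dotProduct y v) • y :=
        vecMulVec_mulVec_eq y v
      rw [e1, e2, dotProduct_add, dotProduct_sub, dotProduct_smul,
        dotProduct_smul, dotProduct_smul, dotProduct_smul]
      rw [dotProduct_mulVec_symm hB.1 s v]
      have e3 : dotProduct v y = dotProduct y v := dotProduct_comm v y
      rw [e3]
      simp only [smul_eq_mul]
      ring
    rw [hquad]
    -- now the inequality
    set r := dotProduct v (Bm.mulVec s) with hrdef
    set a := r / q with hadef
    by_cases hw : v - a • s = 0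
    · have hva : v = a • s := sub_eq_zero.mp hw
      have ha : a ≠ 0 := by
        intro h0; rw [h0, zero_smul] at hva; exact hv hva
      have hb1 : dotProduct v (Bm.mulVec v) = a ^ 2 * q := by
        rw [hva, Matrix.mulVec_smul, smul_dotProduct, dotProduct_smul, ← hqdef]
        simp only [smul_eq_mul]; ring
      have hr : r = a * q := by
        rw [hrdef, hva, smul_dotProduct, ← hqdef]; simp only [smul_eq_mul]
      have hb3 : dotProduct y v = a * dotProduct y s := by
        rw [hva, dotProduct_smul]; simp only [smul_eq_mul]
      rw [hb1, hr, hb3]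
      have heq : a ^ 2 * q - q⁻¹ * (a * q) ^ 2
          + (dotProduct y s)⁻¹ * (a * dotProduct y s) ^ 2
          = a ^ 2 * dotProduct y s := by
        field_simp
        ring
      rw [heq]
      exact mul_pos (lt_of_le_of_ne (sq_nonneg a) (Ne.symm (pow_ne_zero 2 ha))) hys'
    · have hww := posdef_quad hB _ hw
      have hexp : dotProduct (v - a • s) (Bm.mulVec (v - a • s))
          = dotProduct v (Bm.mulVec v) - 2 * a * r + a ^ 2 * q := by
        have hsy : dotProduct s (Bm.mulVec v) = dotProduct v (Bm.mulVec s) :=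
          dotProduct_mulVec_symm hB.1 s v
        simp only [Matrix.mulVec_sub, Matrix.mulVec_smul, sub_dotProduct,
          smul_dotProduct, dotProduct_sub, dotProduct_smul,
          smul_eq_mul, hsy, ← hrdef, ← hqdef]
        ring
      have hkey : 0 < dotProduct v (Bm.mulVec v) - q⁻¹ * r ^ 2 := by
        have : dotProduct v (Bm.mulVec v) - 2 * a * r + a ^ 2 * q
            = dotProduct v (Bm.mulVec v) - q⁻¹ * r ^ 2 := by
          rw [hadef]; field_simp; ring
        rw [← this]; rw [← hexp]; exact hww
      have : 0 ≤ (dotProduct y s)⁻¹ * (dotProduct y v) ^ 2 := by positivity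
      linarith

lemma omega_nonneg {z : ℝ} (hz : 0 ≤ z) : 0 ≤ omegaFn z := by
  have h1 : Real.log (1 + z) ≤ (1 + z) - 1 :=
    Real.log_le_sub_one_of_pos (by linarith)
  unfold omegaFn; linarith

lemma omega_quarter {z : ℝ} (hz : 1 ≤ z) : 1 / 4 ≤ omegaFn z := by
  have h2 : Real.log (1 + z) = Real.log ((1 + z) / 2) + Real.log 2 := by
    rw [← Real.log_mul (by positivity) (by norm_num)]
    norm_num
  have h3 : Real.log ((1 + z) / 2) ≤ (1 + z) / 2 - 1 :=
    Real.log_le_sub_one_of_pos (by positivity)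
  have h4 : Real.log 2 < 0.6931471808 := Real.log_two_lt_d9
  unfold omegaFn
  nlinarith

lemma dot_neg_right (u v : V n) : dot u (-v) = -(dot u v) := by
  simp [dot, mul_neg]

lemma step_analysis {μ M : ℝ} (hμ : 0 < μ) (hM : 0 < M)
    (hf : ContDiff ℝ 3 f) (hsc : StrongConvex μ f) (hself : SelfConcordant M f)
    (x : ℕ → V n) (B : ℕ → Matrix (Fin n) (Fin n) ℝ) (halg : AdaptiveBFGS f M x B)
    (k : ℕ) (hB : (B k).PosDef) :
    (B (k + 1)).PosDef ∧ 0 ≤ etaSeq f x B k ∧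
      f (x (k + 1)) ≤ f (x k) - omegaFn (M * etaSeq f x B k) / M ^ 2 := by
  by_cases hg : gvec f x k = 0
  · -- gradient zero: nothing moves
    have hd : dvec f x B k = 0 := by
      unfold dvec
      rw [hg]
      have h0 : mulv (B k)⁻¹ (0 : V n) = 0 := by
        have : ((B k)⁻¹).mulVec (0 : Fin n → ℝ) = 0 := Matrix.mulVec_zero _
        simp [mulv]
      rw [h0, neg_zero]
    have heta : etaSeq f x B k = 0 := by
      unfold etaSeq
      rw [hd]
      have : dot (gvec f x k) (0 : V n) = 0 := by simp [dot]
      rw [this, neg_zero, zero_div]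
    have hstep : x (k + 1) = x k := by
      rw [halg.step k, hd, smul_zero, add_zero]
    have hsvec : svec x k = 0 := by unfold svec; rw [hstep]; exact sub_self _
    have hyvec : yvec f x k = 0 := by unfold yvec gvec; rw [hstep]; exact sub_self _
    have hBk : B (k + 1) = B k := by
      rw [halg.update k, hsvec, hyvec]
      have h2 : outer (0 : V n) (0 : V n) = 0 := by ext i j; simp [outer]
      rw [h2]
      have h1 : dot (0 : V n) (mulv (B k) 0) = 0 := by simp [dot]
      rw [h1]
      simp
    refine ⟨by rw [hBk]; exact hB, le_of_eq heta.symm, ?_⟩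
    rw [hstep, heta, mul_zero]
    have hω : omegaFn 0 = 0 := by unfold omegaFn; simp
    rw [hω]
    simp
  · -- main case
    have hBinv : ((B k)⁻¹).PosDef := hB.inv
    have hquadpos : 0 < dot (gvec f x k) (mulv (B k)⁻¹ (gvec f x k)) :=
      posdef_quad hBinv (gvec f x k).ofLp (fun h => hg (congrArg (WithLp.toLp 2) h))
    have hgd : dot (gvec f x k) (dvec f x B k)
        = -(dot (gvec f x k) (mulv (B k)⁻¹ (gvec f x k))) := by
      unfold dvec
      exact dot_neg_right _ _
    have hdnz : dvec f x B k ≠ 0 := by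
      intro h0
      apply hg
      have h1 : mulv (B k)⁻¹ (gvec f x k) = 0 := by
        unfold dvec at h0
        exact neg_eq_zero.mp h0
      have h2 : (B k).mulVec (((B k)⁻¹).mulVec (gvec f x k)) = gvec f x k := by
        rw [Matrix.mulVec_mulVec,
          Matrix.mul_nonsing_inv _ ((Matrix.isUnit_iff_isUnit_det _).mp hB.isUnit),
          Matrix.one_mulVec]
      have h1' : ((B k)⁻¹).mulVec (gvec f x k) = 0 := congrArg WithLp.ofLp h1
      rw [h1', Matrix.mulVec_zero] at h2
      exact congrArg (WithLp.toLp 2) h2.symm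
    have hb : 0 < wnorm f (x k) (dvec f x B k) :=
      Real.sqrt_pos.mpr (lt_of_lt_of_le
        (mul_pos hμ (pow_pos (norm_pos_iff.mpr hdnz) 2))
        (hessQ_lower hf hsc _ _))
    have heta : etaSeq f x B k
        = dot (gvec f x k) (mulv (B k)⁻¹ (gvec f x k)) / wnorm f (x k) (dvec f x B k) := by
      unfold etaSeq
      rw [hgd, neg_neg]
    have hetapos : 0 < etaSeq f x B k := by
      rw [heta]; exact div_pos hquadpos hb
    have h1η : 0 < 1 + M * etaSeq f x B k := by positivity
    have htpos : 0 < tSeq f M x B k := by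
      unfold tSeq
      exact div_pos hetapos (mul_pos h1η hb)
    have htb : tSeq f M x B k * wnorm f (x k) (dvec f x B k)
        = etaSeq f x B k / (1 + M * etaSeq f x B k) := by
      unfold tSeq
      field_simp
    have hMtb : M * wnorm f (x k) (dvec f x B k) * tSeq f M x B k < 1 := by
      have e : M * wnorm f (x k) (dvec f x B k) * tSeq f M x B k
          = M * etaSeq f x B k / (1 + M * etaSeq f x B k) := by
        rw [mul_assoc, mul_comm (wnorm f (x k) (dvec f x B k)), htb]
        ring
      rw [e, div_lt_one h1η]
      linarith
    have hstep : x (k + 1) = x k + tSeq f M x B k • dvec f x B k := halg.step k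
    have hdes := descent hμ hM hf hsc hself (x k) (dvec f x B k) hdnz
      (tSeq f M x B k) htpos.le hMtb
    have hfder : fderiv ℝ f (x k) (dvec f x B k)
        = -(etaSeq f x B k * wnorm f (x k) (dvec f x B k)) := by
      have e1 : fderiv ℝ f (x k) (dvec f x B k) = dot (gvec f x k) (dvec f x B k) :=
        ((dot_eq_inner _ _).trans (inner_gradient_eq f (x k) (dvec f x B k))).symm
      rw [e1]
      have e2 : etaSeq f x B k * wnorm f (x k) (dvec f x B k)
          = -(dot (gvec f x k) (dvec f x B k)) := by
        unfold etaSeq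
        field_simp
      linarith [e2]
    have hdec : f (x (k + 1)) ≤ f (x k) - omegaFn (M * etaSeq f x B k) / M ^ 2 := by
      rw [hstep]
      refine le_trans hdes ?_
      rw [hfder]
      unfold omegaStar omegaFn
      have e : M * wnorm f (x k) (dvec f x B k) * tSeq f M x B k
          = M * etaSeq f x B k / (1 + M * etaSeq f x B k) := by
        rw [mul_assoc, mul_comm (wnorm f (x k) (dvec f x B k)), htb]
        ring
      rw [e]
      have e3 : 1 - M * etaSeq f x B k / (1 + M * etaSeq f x B k)
          = 1 / (1 + M * etaSeq f x B k) := by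
        field_simp
        ring
      rw [e3, Real.log_div one_ne_zero (ne_of_gt h1η), Real.log_one]
      have e4 : -(etaSeq f x B k * wnorm f (x k) (dvec f x B k)) * tSeq f M x B k
          = -(etaSeq f x B k ^ 2 / (1 + M * etaSeq f x B k)) := by
        rw [neg_mul, mul_assoc, mul_comm (wnorm f (x k) (dvec f x B k)), htb]
        ring
      rw [e4]
      set L := Real.log (1 + M * etaSeq f x B k) with hL
      set ee := etaSeq f x B k with hee
      have hMne : M ≠ 0 := ne_of_gt hM
      have h1ne : 1 + M * ee ≠ 0 := ne_of_gt h1η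
      have heq : f (x k) + -(ee ^ 2 / (1 + M * ee))
          + 1 / M ^ 2 * (-(M * ee / (1 + M * ee)) - (0 - L))
          = f (x k) - (M * ee - L) / M ^ 2 := by
        field_simp
        ring
      rw [heq]
    -- positivity of y·s and the new matrix
    have hsd : svec x k = tSeq f M x B k • dvec f x B k := by
      unfold svec
      rw [hstep]
      abel
    have hsnz : svec x k ≠ 0 := by
      rw [hsd]
      exact smul_ne_zero (ne_of_gt htpos) hdnz
    have hys : 0 < dot (yvec f x k) (svec x k) := by
      have hmono := strong_mono hf hsc (x (k + 1)) (x k)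
      have e1 : dot (yvec f x k) (svec x k)
          = (inner ℝ (gradient f (x (k + 1)) - gradient f (x k)) (x (k + 1) - x k) : ℝ) := by
        rw [dot_eq_inner]; rfl
      rw [e1]
      have hnorm : 0 < ‖x (k + 1) - x k‖ := norm_pos_iff.mpr hsnz
      calc (0:ℝ) < μ * ‖x (k + 1) - x k‖ ^ 2 := by positivity
        _ ≤ _ := hmono
    have hBpos : (B (k + 1)).PosDef := by
      rw [halg.update k]
      exact bfgs_update_posdef hB (svec x k).ofLp (yvec f x k).ofLp
          (fun h => hsnz (congrArg (WithLp.toLp 2) h)) hys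
    exact ⟨hBpos, hetapos.le, hdec⟩


end AuxLemmas

theorem stmt6 {n : ℕ} (f : V n → ℝ) (μ M : ℝ) (hμ : 0 < μ) (hM : 0 < M)
    (hf : ContDiff ℝ 3 f) (hsc : StrongConvex μ f) (hself : SelfConcordant M f)
    (xstar : V n) (hmin : ∀ y, f xstar ≤ f y) (huniq : ∀ y, f y ≤ f xstar → y = xstar)
    (x : ℕ → V n) (B : ℕ → Matrix (Fin n) (Fin n) ℝ) (halg : AdaptiveBFGS f M x B)
    (Δ : ℝ) (hΔ : Δ = f (x 0) - f xstar)
    (k : ℕ) (hk : 1 ≤ k) :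
    ((((Finset.range k).filter (fun i => ¬ M * etaSeq f x B i < 1)).card : ℝ)) ≤
      4 * M ^ 2 * Δ := by
  have hpos : ∀ j, (B j).PosDef := by
    intro j
    induction j with
    | zero => exact halg.posdef
    | succ j ih => exact (step_analysis hμ hM hf hsc hself x B halg j ih).1
  have hdec : ∀ i, f (x (i + 1)) ≤ f (x i) - omegaFn (M * etaSeq f x B i) / M ^ 2 :=
    fun i => (step_analysis hμ hM hf hsc hself x B halg i (hpos i)).2.2
  have hetanneg : ∀ i, 0 ≤ etaSeq f x B i :=
    fun i => (step_analysis hμ hM hf hsc hself x B halg i (hpos i)).2.1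
  have hM2 : (0:ℝ) < M ^ 2 := by positivity
  have hcost : ∀ i, (if M * etaSeq f x B i < 1 then (0:ℝ) else 1 / (4 * M ^ 2))
      ≤ f (x i) - f (x (i + 1)) := by
    intro i
    by_cases hi : M * etaSeq f x B i < 1
    · rw [if_pos hi]
      have h0 : 0 ≤ omegaFn (M * etaSeq f x B i) :=
        omega_nonneg (mul_nonneg hM.le (hetanneg i))
      have h1 : 0 ≤ omegaFn (M * etaSeq f x B i) / M ^ 2 := div_nonneg h0 hM2.le
      linarith [hdec i]
    · rw [if_neg hi]
      push_neg at hi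
      have h4 := omega_quarter hi
      have h5 : (1:ℝ)/4 / M ^ 2 ≤ omegaFn (M * etaSeq f x B i) / M ^ 2 :=
        (div_le_div_iff_of_pos_right hM2).mpr h4
      have h6 : (1:ℝ)/4 / M ^ 2 = 1 / (4 * M ^ 2) := by field_simp
      rw [h6] at h5
      linarith [hdec i]
  have hsum : ∀ m, (∑ i ∈ Finset.range m,
      (if M * etaSeq f x B i < 1 then (0:ℝ) else 1 / (4 * M ^ 2))) ≤ f (x 0) - f (x m) := by
    intro m
    induction m with
    | zero => simp
    | succ m ih =>
      rw [Finset.sum_range_succ]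
      have := hcost m
      linarith
  have hcard : (∑ i ∈ Finset.range k,
      (if M * etaSeq f x B i < 1 then (0:ℝ) else 1 / (4 * M ^ 2)))
      = (((Finset.range k).filter (fun i => ¬ M * etaSeq f x B i < 1)).card : ℝ)
        * (1 / (4 * M ^ 2)) := by
    rw [Finset.sum_ite, Finset.sum_const, Finset.sum_const]
    simp [nsmul_eq_mul]
  have hfinal : (((Finset.range k).filter (fun i => ¬ M * etaSeq f x B i < 1)).card : ℝ)
      * (1 / (4 * M ^ 2)) ≤ Δ := by
    rw [← hcard, hΔ]
    calc _ ≤ f (x 0) - f (x k) := hsum k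
      _ ≤ f (x 0) - f xstar := by linarith [hmin (x k)]
  have h4m : (0:ℝ) < 4 * M ^ 2 := by positivity
  have hdiv : (((Finset.range k).filter (fun i => ¬ M * etaSeq f x B i < 1)).card : ℝ)
      / (4 * M ^ 2) ≤ Δ := by
    rw [div_eq_mul_one_div]
    exact hfinal
  have := (div_le_iff₀ h4m).mp hdiv
  calc (((Finset.range k).filter (fun i => ¬ M * etaSeq f x B i < 1)).card : ℝ)
      ≤ Δ * (4 * M ^ 2) := this
    _ = 4 * M ^ 2 * Δ := by ring
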